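/- Let X be a countable non-discrete Tychonoff space in which every compact subset is finite. Then X is not a sequentially Ascoli space, i.e., there exists a sequence of continuous functions converging to 0 in the compact-open topology on C(X) that is not equicontinuous. -/

import Mathlib

/-- A countable non-discrete Tychonoff space all of whose compact subsets are finite
is not sequentially Ascoli: there is a sequence in `C(X,ℝ)` converging to `0` in the
compact-open topology that is not equicontinuous. -/
theorem stmt_8 {X : Type*} [TopologicalSpace X] [T2Space X] [CompletelyRegularSpace X]
    [Countable X] (hnd : ¬ DiscreteTopology X)
    (hcpt : ∀ K : Set X, IsCompact K → K.Finite) :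
    ∃ f : ℕ → C(X, ℝ), Filter.Tendsto f Filter.atTop (nhds 0) ∧
      ¬ Equicontinuous (fun n => (f n : X → ℝ)) := by
  classical
  -- X is infinite
  have hinf : Infinite X := by
    by_contra h
    rw [not_infinite_iff_finite] at h
    exact hnd (discreteTopology_iff_isOpen_singleton.mpr fun a =>
      isClosed_compl_iff.mp (Set.toFinite _).isClosed)
  -- a non-isolated point z
  obtain ⟨z, hz⟩ : ∃ z : X, ¬ IsOpen ({z} : Set X) := by
    by_contra h
    push_neg at h
    exact hnd (discreteTopology_iff_isOpen_singleton.mpr h)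
  -- an enumeration of X
  obtain ⟨e⟩ : Nonempty (ℕ ≃ X) := nonempty_equiv_of_countable
  -- construct the functions
  have key : ∀ n : ℕ, ∃ g : C(X, ℝ),
      (e n ≠ z → g (e n) = 1) ∧ (∀ x ∈ insert z (e '' {m | m < n}), g x = 0) := by
    intro n
    by_cases h : e n = z
    · exact ⟨0, fun h' => absurd h h', fun x _ => rfl⟩
    · have hSf : (insert z (e '' {m | m < n})).Finite :=
        ((Set.finite_lt_nat n).image e).insert z
      have hS : IsClosed (insert z (e '' {m | m < n})) := hSf.isClosed
      have hx : e n ∉ insert z (e '' {m | m < n}) := by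
        rintro (rfl | ⟨m, hm, hme⟩)
        · exact h rfl
        · have h2 := e.injective hme
          simp only [Set.mem_setOf_eq] at hm
          omega
      obtain ⟨g, hgc, hgx, hgK⟩ :=
        CompletelyRegularSpace.completely_regular (e n) _ hS hx
      refine ⟨⟨fun x => 1 - (g x : ℝ), by fun_prop⟩, fun _ => ?_, fun x hx' => ?_⟩
      · simp [hgx]
      · have h1 : g x = 1 := hgK hx'
        simp [h1]
  choose f hf1 hf0 using key
  have hfz : ∀ n, f n z = 0 := fun n => hf0 n z (Set.mem_insert _ _)
  refine ⟨f, ?_, ?_⟩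
  · -- convergence in compact-open topology
    rw [ContinuousMap.tendsto_iff_forall_isCompact_tendstoUniformlyOn]
    intro K hK
    have hKf : K.Finite := hcpt K hK
    rw [Metric.tendstoUniformlyOn_iff]
    intro ε hε
    rw [show (∀ᶠ n in Filter.atTop, ∀ x ∈ K, dist ((0 : C(X, ℝ)) x) (f n x) < ε) ↔
        (∀ x ∈ K, ∀ᶠ n in Filter.atTop, dist ((0 : C(X, ℝ)) x) (f n x) < ε) from
      hKf.eventually_all]
    intro x _
    filter_upwards [Filter.eventually_gt_atTop (e.symm x)] with n hn
    have : f n x = 0 := hf0 n x (Set.mem_insert_iff.mpr (Or.inr ⟨e.symm x, hn, e.apply_symm_apply x⟩))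
    simp [this, hε]
  · -- not equicontinuous at z
    intro hEq
    have h1 := (Metric.equicontinuousAt_iff_right.mp (hEq z)) 1 one_pos
    obtain ⟨U, hU, hUo, hzU⟩ := eventually_nhds_iff.mp h1
    -- U must contain a point other than z
    obtain ⟨y, hyU, hyz⟩ : ∃ y ∈ U, y ≠ z := by
      by_contra h
      push_neg at h
      have : U = {z} := Set.eq_singleton_iff_unique_mem.mpr ⟨hzU, h⟩
      exact hz (this ▸ hUo)
    have h3 := hU y hyU (e.symm y)
    have h4 : f (e.symm y) y = 1 := by
      have h5 := hf1 (e.symm y) (by rwa [e.apply_symm_apply])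
      rwa [e.apply_symm_apply] at h5
    rw [hfz, h4] at h3
    simp [Real.dist_eq] at h3
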